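/- Let h : (0,∞) → ℝ be a square-integrable function. Then the function (q,q′) ↦ h(q)h(q′)/(q+q′) is integrable on (0,∞) × (0,∞), and ∫₀^∞ ∫₀^∞ h(q) h(q′) / (q + q′) dq dq′ ≥ 0. -/

import Mathlib

open MeasureTheory Set Real

noncomputable def hk0 : ℝ → ℝ := fun u => 1 / (Real.sqrt u * (1 + u))

lemma hk0_comp_eq : ∀ x ∈ Ioi (0:ℝ),
    (|(2:ℝ)| * x ^ ((2:ℝ) - 1)) • hk0 (x ^ (2:ℝ)) = 2 * (1 + x ^ 2)⁻¹ := by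
  intro x hx
  have hx0 : (0:ℝ) < x := hx
  have h1 : x ^ ((2:ℝ)-1) = x := by norm_num
  have h2 : x ^ (2:ℝ) = x ^ 2 := by
    rw [show ((2:ℝ) = ((2:ℕ):ℝ)) by norm_num, Real.rpow_natCast]
  have h3 : Real.sqrt (x ^ 2) = x := Real.sqrt_sq hx0.le
  have h4 : (0:ℝ) < 1 + x ^ 2 := by positivity
  simp only [hk0, h1, h2, h3, smul_eq_mul, abs_of_nonneg (by norm_num : (0:ℝ) ≤ 2)]
  field_simp

lemma hk0_integrableOn : IntegrableOn hk0 (Ioi (0:ℝ)) := by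
  rw [← integrableOn_Ioi_comp_rpow_iff hk0 (two_ne_zero (α := ℝ))]
  exact IntegrableOn.congr_fun ((integrable_inv_one_add_sq.integrableOn).const_mul 2)
    (fun x hx => (hk0_comp_eq x hx).symm) measurableSet_Ioi

lemma hk0_integral : ∫ u in Ioi (0:ℝ), hk0 u = π := by
  rw [← integral_comp_rpow_Ioi hk0 (two_ne_zero (α := ℝ)),
    setIntegral_congr_fun measurableSet_Ioi hk0_comp_eq, integral_const_mul,
    integral_Ioi_inv_one_add_sq]
  simp [Real.arctan_zero]
  ring

lemma slice_eq {q : ℝ} (hq : 0 < q) : ∀ x ∈ Ioi (0:ℝ),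
    q⁻¹ * hk0 (q⁻¹ * x) = Real.sqrt q / Real.sqrt x / (q + x) := by
  intro x hx
  have hx0 : (0:ℝ) < x := hx
  have hq' : Real.sqrt q ≠ 0 := (Real.sqrt_pos.mpr hq).ne'
  have hx' : Real.sqrt x ≠ 0 := (Real.sqrt_pos.mpr hx0).ne'
  have h1 : Real.sqrt (q⁻¹ * x) = Real.sqrt x / Real.sqrt q := by
    rw [Real.sqrt_mul (by positivity), Real.sqrt_inv, div_eq_mul_inv, mul_comm]
  have hs : (0:ℝ) < q + x := by positivity
  simp only [hk0, h1]
  rw [div_div]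
  rw [eq_div_iff (by positivity)]
  field_simp

lemma slice_integrableOn {q : ℝ} (hq : 0 < q) :
    IntegrableOn (fun x => Real.sqrt q / Real.sqrt x / (q + x)) (Ioi (0:ℝ)) := by
  have h0 : IntegrableOn (fun x => hk0 (q⁻¹ * x)) (Ioi (0:ℝ)) := by
    rw [integrableOn_Ioi_comp_mul_left_iff hk0 0 (inv_pos.mpr hq), mul_zero]
    exact hk0_integrableOn
  exact IntegrableOn.congr_fun (h0.const_mul q⁻¹) (slice_eq hq) measurableSet_Ioi

lemma slice_integral {q : ℝ} (hq : 0 < q) :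
    ∫ x in Ioi (0:ℝ), Real.sqrt q / Real.sqrt x / (q + x) = π := by
  rw [← setIntegral_congr_fun measurableSet_Ioi (slice_eq hq), integral_const_mul]
  rw [integral_comp_mul_left_Ioi hk0 0 (inv_pos.mpr hq), mul_zero, hk0_integral,
    smul_eq_mul, inv_inv]
  field_simp

lemma slice_nonneg {q : ℝ} (hq : 0 < q) {x : ℝ} (hx : 0 < x) :
    0 ≤ Real.sqrt q / Real.sqrt x / (q + x) := by positivity

lemma exp_slice_integrableOn {s : ℝ} (hs : 0 < s) :
    IntegrableOn (fun t => Real.exp (-(s*t))) (Ioi (0:ℝ)) := by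
  simpa [neg_mul] using exp_neg_integrableOn_Ioi 0 hs

lemma exp_slice_integral {s : ℝ} (hs : 0 < s) :
    ∫ t in Ioi (0:ℝ), Real.exp (-(s*t)) = s⁻¹ := by
  have := integral_comp_mul_left_Ioi (fun u => Real.exp (-u)) 0 hs
  simp only [mul_zero, integral_exp_neg_Ioi, neg_zero, Real.exp_zero, smul_eq_mul,
    mul_one] at this
  exact this

theorem hilbert_kernel_quadratic_form_nonneg
    (h : ℝ → ℝ) (hh : MemLp h 2 (volume.restrict (Set.Ioi (0 : ℝ)))) :
    Integrable (fun x : ℝ × ℝ => h x.1 * h x.2 / (x.1 + x.2))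
      ((volume.restrict (Set.Ioi (0 : ℝ))).prod (volume.restrict (Set.Ioi (0 : ℝ)))) ∧
    0 ≤ ∫ q in Set.Ioi (0 : ℝ), ∫ q' in Set.Ioi (0 : ℝ), h q * h q' / (q + q') := by
  have hm : AEStronglyMeasurable h (volume.restrict (Set.Ioi (0 : ℝ))) := hh.1
  have hma : AEMeasurable h (volume.restrict (Set.Ioi (0 : ℝ))) := hm.aemeasurable
  have hsqi : Integrable (fun q => h q ^ 2) (volume.restrict (Set.Ioi (0 : ℝ))) :=
    hh.integrable_sq
  have hKm : Measurable (fun x : ℝ×ℝ => Real.sqrt x.1 / Real.sqrt x.2 / (x.1+x.2)) :=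
    ((Real.continuous_sqrt.measurable.comp measurable_fst).div
      (Real.continuous_sqrt.measurable.comp measurable_snd)).div
      (measurable_fst.add measurable_snd)
  have hae : ∀ᵐ x : ℝ×ℝ ∂((volume.restrict (Set.Ioi (0 : ℝ))).prod
      (volume.restrict (Set.Ioi (0 : ℝ)))), x ∈ Ioi (0:ℝ) ×ˢ Ioi (0:ℝ) := by
    rw [Measure.prod_restrict]
    exact ae_restrict_mem (measurableSet_Ioi.prod measurableSet_Ioi)
  have haeq : ∀ᵐ q ∂(volume.restrict (Set.Ioi (0 : ℝ))), q ∈ Ioi (0:ℝ) :=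
    ae_restrict_mem measurableSet_Ioi
  -- T1 integrable
  have hT1 : Integrable (fun x : ℝ×ℝ => h x.1 ^ 2 * (Real.sqrt x.1 / Real.sqrt x.2 / (x.1+x.2)))
      ((volume.restrict (Set.Ioi (0 : ℝ))).prod (volume.restrict (Set.Ioi (0 : ℝ)))) := by
    refine (integrable_prod_iff (f := fun x : ℝ×ℝ => h x.1 ^ 2 * (Real.sqrt x.1 / Real.sqrt x.2 / (x.1+x.2)))
      ((hsqi.aemeasurable.comp_fst.mul hKm.aemeasurable).aestronglyMeasurable)).2 ⟨?_, ?_⟩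
    · filter_upwards [haeq] with q hq
      exact (slice_integrableOn hq).const_mul _
    · refine (hsqi.mul_const π).congr ?_
      filter_upwards [haeq] with q hq
      have heq : ∀ y ∈ Ioi (0:ℝ), ‖h q ^ 2 * (Real.sqrt q / Real.sqrt y / (q+y))‖
          = h q ^ 2 * (Real.sqrt q / Real.sqrt y / (q+y)) := by
        intro y hy
        have hy0 : (0:ℝ) < y := hy
        have hq0 : (0:ℝ) < q := hq
        rw [Real.norm_eq_abs, abs_of_nonneg (by positivity)]
      rw [setIntegral_congr_fun measurableSet_Ioi heq, integral_const_mul, slice_integral hq]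
  have hT2 : Integrable (fun x : ℝ×ℝ => h x.2 ^ 2 * (Real.sqrt x.2 / Real.sqrt x.1 / (x.1+x.2)))
      ((volume.restrict (Set.Ioi (0 : ℝ))).prod (volume.restrict (Set.Ioi (0 : ℝ)))) := by
    have hfun : (fun x : ℝ×ℝ => h x.2 ^ 2 * (Real.sqrt x.2 / Real.sqrt x.1 / (x.1+x.2)))
        = (fun x : ℝ×ℝ => h x.1 ^ 2 * (Real.sqrt x.1 / Real.sqrt x.2 / (x.1+x.2)))
          ∘ Prod.swap := by
      funext x
      simp only [Function.comp_apply, Prod.fst_swap, Prod.snd_swap]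
      rw [add_comm]
    rw [hfun]
    exact hT1.swap
  -- main integrand a.e. measurable
  have hfm : AEStronglyMeasurable (fun x : ℝ×ℝ => h x.1 * h x.2 / (x.1+x.2))
      ((volume.restrict (Set.Ioi (0 : ℝ))).prod (volume.restrict (Set.Ioi (0 : ℝ)))) :=
    ((hma.comp_fst.mul hma.comp_snd).div ((measurable_fst.add measurable_snd).aemeasurable)
      ).aestronglyMeasurable
  -- integrability of the main function
  have hf1 : Integrable (fun x : ℝ×ℝ => h x.1 * h x.2 / (x.1+x.2))
      ((volume.restrict (Set.Ioi (0 : ℝ))).prod (volume.restrict (Set.Ioi (0 : ℝ)))) := by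
    refine Integrable.mono' (((hT1.add hT2).const_mul (1/2))) hfm ?_
    filter_upwards [hae] with x hx
    obtain ⟨h1, h2⟩ := hx
    have h1 : (0:ℝ) < x.1 := h1
    have h2 : (0:ℝ) < x.2 := h2
    have hc : (0:ℝ) < Real.sqrt x.1 := Real.sqrt_pos.mpr h1
    have hd : (0:ℝ) < Real.sqrt x.2 := Real.sqrt_pos.mpr h2
    have hs : (0:ℝ) < x.1 + x.2 := by linarith
    rw [Real.norm_eq_abs, abs_div, abs_of_pos hs, abs_mul]
    have key : |h x.1| * |h x.2| ≤ 1/2 * (h x.1 ^ 2 * (Real.sqrt x.1 / Real.sqrt x.2)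
        + h x.2 ^ 2 * (Real.sqrt x.2 / Real.sqrt x.1)) := by
      rw [← sub_nonneg]
      have hid : 1/2 * (h x.1 ^ 2 * (Real.sqrt x.1 / Real.sqrt x.2)
          + h x.2 ^ 2 * (Real.sqrt x.2 / Real.sqrt x.1)) - |h x.1| * |h x.2|
          = (|h x.1| * Real.sqrt x.1 - |h x.2| * Real.sqrt x.2)^2
            / (2 * (Real.sqrt x.1 * Real.sqrt x.2)) := by
        rw [← sq_abs (h x.1), ← sq_abs (h x.2)]
        field_simp
        ring
      rw [hid]
      positivity
    calc |h x.1| * |h x.2| / (x.1 + x.2)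
        ≤ (1/2 * (h x.1 ^ 2 * (Real.sqrt x.1 / Real.sqrt x.2)
            + h x.2 ^ 2 * (Real.sqrt x.2 / Real.sqrt x.1))) / (x.1 + x.2) := by gcongr
      _ = 1/2 * (h x.1 ^ 2 * (Real.sqrt x.1 / Real.sqrt x.2 / (x.1+x.2))
            + h x.2 ^ 2 * (Real.sqrt x.2 / Real.sqrt x.1 / (x.1+x.2))) := by ring
  refine ⟨hf1, ?_⟩
  -- the triple-variable function
  have hFm : AEStronglyMeasurable
      (fun z : (ℝ×ℝ)×ℝ => h z.1.1 * h z.1.2 * Real.exp (-((z.1.1+z.1.2) * z.2)))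
      (((volume.restrict (Set.Ioi (0 : ℝ))).prod (volume.restrict (Set.Ioi (0 : ℝ)))).prod
        (volume.restrict (Set.Ioi (0 : ℝ)))) := by
    have hexp : Measurable (fun z : (ℝ×ℝ)×ℝ => Real.exp (-((z.1.1+z.1.2) * z.2))) := by
      fun_prop
    exact ((hma.comp_fst.comp_fst.mul hma.comp_snd.comp_fst).mul hexp.aemeasurable).aestronglyMeasurable
  have hFi : Integrable
      (fun z : (ℝ×ℝ)×ℝ => h z.1.1 * h z.1.2 * Real.exp (-((z.1.1+z.1.2) * z.2)))
      (((volume.restrict (Set.Ioi (0 : ℝ))).prod (volume.restrict (Set.Ioi (0 : ℝ)))).prod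
        (volume.restrict (Set.Ioi (0 : ℝ)))) := by
    refine (integrable_prod_iff hFm).2 ⟨?_, ?_⟩
    · filter_upwards [hae] with x hx
      have hs : (0:ℝ) < x.1 + x.2 := add_pos hx.1 hx.2
      exact (exp_slice_integrableOn hs).const_mul _
    · refine hf1.norm.congr ?_
      filter_upwards [hae] with x hx
      have hs : (0:ℝ) < x.1 + x.2 := add_pos hx.1 hx.2
      have heq : ∀ t ∈ Ioi (0:ℝ), ‖h x.1 * h x.2 * Real.exp (-((x.1+x.2)*t))‖
          = |h x.1 * h x.2| * Real.exp (-((x.1+x.2)*t)) := by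
        intro t ht
        rw [Real.norm_eq_abs, abs_mul, abs_of_pos (Real.exp_pos _)]
      rw [setIntegral_congr_fun measurableSet_Ioi heq, integral_const_mul,
        exp_slice_integral hs, Real.norm_eq_abs, abs_div, abs_of_pos hs, div_eq_mul_inv]
  -- swap the order of integration
  have hswap := integral_integral_swap
    (f := fun (x : ℝ×ℝ) (t : ℝ) => h x.1 * h x.2 * Real.exp (-((x.1+x.2) * t))) hFi
  have step1 : ∫ x : ℝ×ℝ, h x.1 * h x.2 / (x.1+x.2)
        ∂((volume.restrict (Set.Ioi (0 : ℝ))).prod (volume.restrict (Set.Ioi (0 : ℝ))))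
      = ∫ x : ℝ×ℝ, (∫ t in Ioi (0:ℝ), h x.1 * h x.2 * Real.exp (-((x.1+x.2) * t)))
        ∂((volume.restrict (Set.Ioi (0 : ℝ))).prod (volume.restrict (Set.Ioi (0 : ℝ)))) := by
    refine integral_congr_ae ?_
    filter_upwards [hae] with x hx
    have hs : (0:ℝ) < x.1 + x.2 := add_pos hx.1 hx.2
    rw [integral_const_mul, exp_slice_integral hs, div_eq_mul_inv]
  have step3 : ∀ t : ℝ, ∫ x : ℝ×ℝ, h x.1 * h x.2 * Real.exp (-((x.1+x.2) * t))
        ∂((volume.restrict (Set.Ioi (0 : ℝ))).prod (volume.restrict (Set.Ioi (0 : ℝ))))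
      = (∫ q in Ioi (0:ℝ), h q * Real.exp (-(q*t)))^2 := by
    intro t
    have hfun : (fun x : ℝ×ℝ => h x.1 * h x.2 * Real.exp (-((x.1+x.2) * t)))
        = fun x : ℝ×ℝ => (fun q => h q * Real.exp (-(q*t))) x.1
            * (fun q => h q * Real.exp (-(q*t))) x.2 := by
      funext x
      simp only
      rw [show -((x.1+x.2)*t) = -(x.1*t) + -(x.2*t) by ring, Real.exp_add]
      ring
    rw [hfun, sq]
    exact integral_prod_mul (L := ℝ) (fun q => h q * Real.exp (-(q*t))) (fun q => h q * Real.exp (-(q*t)))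
  have goal_eq : ∫ q in Set.Ioi (0 : ℝ), ∫ q' in Set.Ioi (0 : ℝ), h q * h q' / (q + q')
      = ∫ x : ℝ×ℝ, h x.1 * h x.2 / (x.1+x.2)
        ∂((volume.restrict (Set.Ioi (0 : ℝ))).prod (volume.restrict (Set.Ioi (0 : ℝ)))) :=
    (integral_prod _ hf1).symm
  rw [goal_eq]
  calc (0:ℝ) ≤ ∫ t in Ioi (0:ℝ), (∫ q in Ioi (0:ℝ), h q * Real.exp (-(q*t)))^2 :=
        integral_nonneg fun t => sq_nonneg _
    _ = ∫ t in Ioi (0:ℝ), ∫ x : ℝ×ℝ, h x.1 * h x.2 * Real.exp (-((x.1+x.2) * t))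
          ∂((volume.restrict (Set.Ioi (0 : ℝ))).prod (volume.restrict (Set.Ioi (0 : ℝ)))) :=
        integral_congr_ae (Filter.Eventually.of_forall fun t => (step3 t).symm)
    _ = ∫ x : ℝ×ℝ, (∫ t in Ioi (0:ℝ), h x.1 * h x.2 * Real.exp (-((x.1+x.2) * t)))
          ∂((volume.restrict (Set.Ioi (0 : ℝ))).prod (volume.restrict (Set.Ioi (0 : ℝ)))) :=
        hswap.symm
    _ = _ := step1.symm
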